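/- arXiv:1806.09474 — 2 statements merged into one kernel-verified Lean document; each statement's English description precedes it below -/
import Mathlib

section
/- There is no perfect uncorrelated quantum strategy for the ALC task: there do not exist density operators ρ_A^x, ρ_B^y on ℂ² (for x, y ∈ {0,1}^2) and a POVM {M₀, M₁ = I − M₀} on ℂ² ⊗ ℂ² such that Tr[(ρ_A^x ⊗ ρ_B^y) M₀] = 1 whenever x = y and Tr[(ρ_A^x ⊗ ρ_B^y) M₀] = 0 whenever x ≠ y. -/
open Matrix Kronecker ComplexOrder

/-- trace of `Aᴴ * A` is zero iff `A = 0`. -/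
lemma trace_conjTranspose_mul_self_eq_zero' {m n : Type*} [Fintype m] [Fintype n]
    {A : Matrix m n ℂ} (h : (Aᴴ * A).trace = 0) : A = 0 := by
  have h' : ∑ j, ∑ i, star (A i j) * A i j = 0 := by
    simpa [Matrix.trace, Matrix.diag, Matrix.mul_apply, Matrix.conjTranspose_apply] using h
  have hnn : ∀ i j, (0 : ℂ) ≤ star (A i j) * A i j := fun i j => star_mul_self_nonneg _
  ext i j
  have h1 : ∀ j' ∈ Finset.univ, (0 : ℂ) ≤ ∑ i, star (A i j') * A i j' :=
    fun j' _ => Finset.sum_nonneg fun i _ => hnn i j'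
  have h2 := (Finset.sum_eq_zero_iff_of_nonneg h1).mp h' j (Finset.mem_univ j)
  have h3 := (Finset.sum_eq_zero_iff_of_nonneg (fun i _ => hnn i j)).mp h2 i (Finset.mem_univ i)
  have : A i j = 0 := by
    have := mul_eq_zero.mp h3
    rcases this with hs | hs
    · simpa using congrArg star hs
    · exact hs
  simpa using this

open scoped MatrixOrder in
/-- If `A`, `B` are PSD and `trace (A * B) = 0`, then `A * B = 0`. -/
lemma psd_mul_eq_zero_of_trace {n : Type*} [Fintype n] [DecidableEq n]
    {A B : Matrix n n ℂ} (hA : A.PosSemidef) (hB : B.PosSemidef)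
    (h : (A * B).trace = 0) : A * B = 0 := by
  set a := CFC.sqrt A with ha
  set b := CFC.sqrt B with hb
  have haa : a * a = A := CFC.sqrt_mul_sqrt_self A hA.nonneg
  have hbb : b * b = B := CFC.sqrt_mul_sqrt_self B hB.nonneg
  have haH : aᴴ = a := (CFC.sqrt_nonneg A).posSemidef.1
  have hbH : bᴴ = b := (CFC.sqrt_nonneg B).posSemidef.1
  have key : ((b * a)ᴴ * (b * a)).trace = 0 := by
    have : (b * a)ᴴ * (b * a) = a * b * (b * a) := by
      rw [conjTranspose_mul, haH, hbH]
    rw [this]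
    have : (A * B).trace = (a * b * (b * a)).trace := by
      rw [← haa, ← hbb]
      rw [show a * a * (b * b) = a * (a * b * b) by noncomm_ring]
      rw [Matrix.trace_mul_comm]
      noncomm_ring
    rw [← this, h]
  have hba : b * a = 0 := trace_conjTranspose_mul_self_eq_zero' key
  have hab : a * b = 0 := by
    have : (b * a)ᴴ = a * b := by rw [conjTranspose_mul, haH, hbH]
    rw [← this, hba, conjTranspose_zero]
  calc A * B = a * (a * b) * b := by rw [← haa, ← hbb]; noncomm_ring
    _ = 0 := by rw [hab, Matrix.mul_zero, Matrix.zero_mul]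

lemma kron_conjTranspose {l m p q : Type*} (A : Matrix l m ℂ) (B : Matrix p q ℂ) :
    (A ⊗ₖ B)ᴴ = Aᴴ ⊗ₖ Bᴴ := by
  ext ⟨i, j⟩ ⟨k, l⟩
  simp [Matrix.conjTranspose_apply, Matrix.kroneckerMap_apply]

open scoped MatrixOrder in
lemma posSemidef_kron {n m : Type*} [Fintype n] [Fintype m] [DecidableEq n] [DecidableEq m]
    {A : Matrix n n ℂ} {B : Matrix m m ℂ}
    (hA : A.PosSemidef) (hB : B.PosSemidef) : (A ⊗ₖ B).PosSemidef := by
  obtain ⟨C, hC⟩ := CStarAlgebra.nonneg_iff_eq_star_mul_self.mp hA.nonneg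
  obtain ⟨D, hD⟩ := CStarAlgebra.nonneg_iff_eq_star_mul_self.mp hB.nonneg
  have : A ⊗ₖ B = (C ⊗ₖ D)ᴴ * (C ⊗ₖ D) := by
    rw [hC, hD, star_eq_conjTranspose, star_eq_conjTranspose, kron_conjTranspose, Matrix.mul_kronecker_mul]
  rw [this]
  exact Matrix.posSemidef_conjTranspose_mul_self _

lemma sum_sq_eq_zero {a b : ℂ} (h : star a * a + star b * b = 0) : a = 0 ∧ b = 0 := by
  have ha : star a * a = (Complex.normSq a : ℂ) := by
    rw [mul_comm]; exact Complex.mul_conj a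
  have hb : star b * b = (Complex.normSq b : ℂ) := by
    rw [mul_comm]; exact Complex.mul_conj b
  rw [ha, hb] at h
  have h' : (Complex.normSq a + Complex.normSq b : ℝ) = 0 := by
    exact_mod_cast h
  have hA : Complex.normSq a = 0 := by
    nlinarith [Complex.normSq_nonneg a, Complex.normSq_nonneg b]
  have hB : Complex.normSq b = 0 := by
    nlinarith [Complex.normSq_nonneg a, Complex.normSq_nonneg b]
  exact ⟨Complex.normSq_eq_zero.mp hA, Complex.normSq_eq_zero.mp hB⟩

/-- Three nonzero pairwise-orthogonal vectors in `ℂ²` cannot exist. -/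
lemma no_three_ortho {a1 b1 a2 b2 a3 b3 : ℂ}
    (h1 : ¬(a1 = 0 ∧ b1 = 0)) (h2 : ¬(a2 = 0 ∧ b2 = 0)) (h3 : ¬(a3 = 0 ∧ b3 = 0))
    (h12 : star a1 * a2 + star b1 * b2 = 0)
    (h13 : star a1 * a3 + star b1 * b3 = 0)
    (h23 : star a2 * a3 + star b2 * b3 = 0) : False := by
  by_cases ha1 : a1 = 0
  · have hb1 : b1 ≠ 0 := fun hb => h1 ⟨ha1, hb⟩
    have hb2 : b2 = 0 := by
      have : star b1 * b2 = 0 := by simpa [ha1] using h12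
      rcases mul_eq_zero.mp this with hs | hs
      · exact absurd (by simpa using congrArg star hs) hb1
      · exact hs
    have hb3 : b3 = 0 := by
      have : star b1 * b3 = 0 := by simpa [ha1] using h13
      rcases mul_eq_zero.mp this with hs | hs
      · exact absurd (by simpa using congrArg star hs) hb1
      · exact hs
    have ha2 : a2 ≠ 0 := fun ha => h2 ⟨ha, hb2⟩
    have ha3 : a3 ≠ 0 := fun ha => h3 ⟨ha, hb3⟩
    have : star a2 * a3 = 0 := by simpa [hb2] using h23
    rcases mul_eq_zero.mp this with hs | hs
    · exact ha2 (by simpa using congrArg star hs)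
    · exact ha3 hs
  · have hsa1 : star a1 ≠ 0 := star_ne_zero.mpr ha1
    -- cross-product relation : a2 * b3 = a3 * b2
    have hcross : a2 * b3 = a3 * b2 := by
      have e1 : star a1 * (a2 * b3) = -(star b1 * b2 * b3) := by
        have := congrArg (· * b3) h12
        simp only [add_mul, zero_mul] at this
        linear_combination this
      have e2 : star a1 * (a3 * b2) = -(star b1 * b3 * b2) := by
        have := congrArg (· * b2) h13
        simp only [add_mul, zero_mul] at this
        linear_combination this
      have : star a1 * (a2 * b3) = star a1 * (a3 * b2) := by
        rw [e1, e2]; ring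
      exact mul_left_cancel₀ hsa1 this
    have hw2 : ¬(star a2 * a2 + star b2 * b2 = 0) := fun h => h2 (sum_sq_eq_zero h)
    have ha3 : a3 = 0 := by
      have : (star a2 * a2 + star b2 * b2) * a3 = 0 := by
        have := congrArg (· * a2) h23
        simp only [add_mul, zero_mul] at this
        linear_combination this + (star b2) * hcross.symm
      rcases mul_eq_zero.mp this with hs | hs
      · exact absurd hs hw2
      · exact hs
    have hb3 : b3 = 0 := by
      have : (star a2 * a2 + star b2 * b2) * b3 = 0 := by
        have := congrArg (· * b2) h23
        simp only [add_mul, zero_mul] at this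
        linear_combination this + (star a2) * hcross
      rcases mul_eq_zero.mp this with hs | hs
      · exact absurd hs hw2
      · exact hs
    exact h3 ⟨ha3, hb3⟩

/-- orthogonality of columns from vanishing product, for Hermitian `σ`. -/
lemma col_orth {σ τ : Matrix (Fin 2) (Fin 2) ℂ} (hσ : σ.IsHermitian)
    (h : σ * τ = 0) (j k : Fin 2) :
    star (σ 0 j) * τ 0 k + star (σ 1 j) * τ 1 k = 0 := by
  have hs : ∀ i, star (σ i j) = σ j i := fun i => by
    conv_rhs => rw [← hσ]
    simp [Matrix.conjTranspose_apply]
  have : (σ * τ) j k = 0 := by rw [h]; rfl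
  rw [Matrix.mul_apply, Fin.sum_univ_two] at this
  rw [hs 0, hs 1]
  exact this

lemma col_ne_zero {σ : Matrix (Fin 2) (Fin 2) ℂ} (ht : σ.trace = 1) :
    ∃ j, ¬(σ 0 j = 0 ∧ σ 1 j = 0) := by
  have htr : σ 0 0 + σ 1 1 = 1 := by
    have : σ.trace = σ 0 0 + σ 1 1 := by
      simp [Matrix.trace, Matrix.diag, Fin.sum_univ_two]
    rw [this] at ht; exact ht
  by_cases h00 : σ 0 0 = 0
  · refine ⟨1, fun ⟨_, h11⟩ => ?_⟩
    rw [h00, h11] at htr; simp at htr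
  · exact ⟨0, fun ⟨h0, _⟩ => h00 h0⟩

/-- three qubit density matrices with pairwise vanishing products cannot exist. -/
lemma no_three_states {σ1 σ2 σ3 : Matrix (Fin 2) (Fin 2) ℂ}
    (h1 : σ1.PosSemidef) (t1 : σ1.trace = 1)
    (h2 : σ2.PosSemidef) (t2 : σ2.trace = 1)
    (h3 : σ3.PosSemidef) (t3 : σ3.trace = 1)
    (h12 : σ1 * σ2 = 0) (h13 : σ1 * σ3 = 0) (h23 : σ2 * σ3 = 0) : False := by
  obtain ⟨j1, hj1⟩ := col_ne_zero t1
  obtain ⟨j2, hj2⟩ := col_ne_zero t2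
  obtain ⟨j3, hj3⟩ := col_ne_zero t3
  exact no_three_ortho hj1 hj2 hj3
    (col_orth h1.1 h12 j1 j2) (col_orth h1.1 h13 j1 j3) (col_orth h2.1 h23 j2 j3)

/-- no perfect uncorrelated quantum strategy for the ALC task.
There are no qubit density operators `ρA x`, `ρB y` and a two-outcome POVM
`{M₀, 1 - M₀}` on `ℂ² ⊗ ℂ²` whose first outcome has probability `1` exactly
when `x = y` and `0` otherwise. -/
theorem alc_no_perfect_uncorrelated_quantum_strategy :
    ¬ ∃ (ρA ρB : Bool × Bool → Matrix (Fin 2) (Fin 2) ℂ)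
        (M₀ : Matrix (Fin 2 × Fin 2) (Fin 2 × Fin 2) ℂ),
      (∀ x, (ρA x).PosSemidef ∧ (ρA x).trace = 1) ∧
      (∀ y, (ρB y).PosSemidef ∧ (ρB y).trace = 1) ∧
      M₀.PosSemidef ∧ (1 - M₀).PosSemidef ∧
      (∀ x y, ((ρA x ⊗ₖ ρB y) * M₀).trace = if x = y then 1 else 0) := by
  rintro ⟨ρA, ρB, M₀, hA, hB, hM, hM', h⟩
  have hk : ∀ x y, (ρA x ⊗ₖ ρB y).PosSemidef :=
    fun x y => posSemidef_kron (hA x).1 (hB y).1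
  -- for x = y : M₀ acts as identity on ρA x ⊗ ρB x
  have h1 : ∀ x, M₀ * (ρA x ⊗ₖ ρB x) = ρA x ⊗ₖ ρB x := by
    intro x
    have tz : ((ρA x ⊗ₖ ρB x) * (1 - M₀)).trace = 0 := by
      rw [Matrix.mul_sub, Matrix.mul_one, Matrix.trace_sub, h x x]
      simp [Matrix.trace_kronecker, (hA x).2, (hB x).2]
    have hz := psd_mul_eq_zero_of_trace (hk x x) hM' tz
    have hz' : (ρA x ⊗ₖ ρB x) * M₀ = ρA x ⊗ₖ ρB x := by
      have := hz
      rw [Matrix.mul_sub, Matrix.mul_one, sub_eq_zero] at this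
      exact this.symm
    calc M₀ * (ρA x ⊗ₖ ρB x) = ((ρA x ⊗ₖ ρB x) * M₀)ᴴ := by
          rw [conjTranspose_mul, hM.1, (hk x x).1]
      _ = (ρA x ⊗ₖ ρB x)ᴴ := by rw [hz']
      _ = ρA x ⊗ₖ ρB x := (hk x x).1
  -- for x ≠ y : the product with M₀ vanishes
  have h0 : ∀ x y, x ≠ y → (ρA x ⊗ₖ ρB y) * M₀ = 0 := by
    intro x y hxy
    refine psd_mul_eq_zero_of_trace (hk x y) hM ?_
    rw [h x y, if_neg hxy]
  -- hence the ρB's have pairwise vanishing products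
  have hprod : ∀ x y, y ≠ x → ρB y * ρB x = 0 := by
    intro x y hyx
    have hxy : x ≠ y := fun he => hyx he.symm
    have key : (ρA x ⊗ₖ ρB y) * (ρA x ⊗ₖ ρB x) = 0 := by
      calc (ρA x ⊗ₖ ρB y) * (ρA x ⊗ₖ ρB x)
          = (ρA x ⊗ₖ ρB y) * (M₀ * (ρA x ⊗ₖ ρB x)) := by rw [h1 x]
        _ = ((ρA x ⊗ₖ ρB y) * M₀) * (ρA x ⊗ₖ ρB x) := by rw [Matrix.mul_assoc]
        _ = 0 := by rw [h0 x y hxy, Matrix.zero_mul]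
    have keytr : (ρA x * ρA x).trace * (ρB y * ρB x).trace = 0 := by
      have : ((ρA x * ρA x) ⊗ₖ (ρB y * ρB x)).trace = 0 := by
        rw [Matrix.mul_kronecker_mul, key, Matrix.trace_zero]
      rwa [Matrix.trace_kronecker] at this
    have hAne : (ρA x * ρA x).trace ≠ 0 := by
      intro htz
      have : (ρA x)ᴴ * ρA x = ρA x * ρA x := by rw [(hA x).1.1]
      have hz : ((ρA x)ᴴ * ρA x).trace = 0 := by rw [this]; exact htz
      have := trace_conjTranspose_mul_self_eq_zero' hz
      have : (ρA x).trace = 0 := by rw [this]; exact Matrix.trace_zero _ _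
      rw [(hA x).2] at this
      exact one_ne_zero this
    have := mul_eq_zero.mp keytr
    rcases this with hs | hs
    · exact absurd hs hAne
    · exact psd_mul_eq_zero_of_trace (hB y).1 (hB x).1 hs
  -- now apply the three-states impossibility to three distinct labels
  have p12 : ρB (false, false) * ρB (false, true) = 0 := hprod _ _ (by simp)
  have p13 : ρB (false, false) * ρB (true, false) = 0 := hprod _ _ (by simp)
  have p23 : ρB (false, true) * ρB (true, false) = 0 := hprod _ _ (by simp)
  exact no_three_states (hB (false, false)).1 (hB (false, false)).2
    (hB (false, true)).1 (hB (false, true)).2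
    (hB (true, false)).1 (hB (true, false)).2 p12 p13 p23
end

section
/- There exists a perfect quantum entangled strategy for the ALC task: using the shared singlet state |ψ⁻⟩, local encoding by Pauli operators σ_k (with strings mapped bijectively to k ∈ {0,1,2,3}), and the verifier measuring the POVM {|ψ⁻⟩⟨ψ⁻|, I − |ψ⁻⟩⟨ψ⁻|}, the verifier's first outcome occurs with probability 1 if x = y and probability 0 if x ≠ y. -/
open Matrix Kronecker

/-- The Pauli matrices, with `σ 0 = I`. -/
noncomputable def pauli : Fin 4 → Matrix (Fin 2) (Fin 2) ℂ
  | 0 => 1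
  | 1 => !![0, 1; 1, 0]
  | 2 => !![0, -Complex.I; Complex.I, 0]
  | 3 => !![1, 0; 0, -1]

/-- The singlet state `|ψ⁻⟩ = (|01⟩ - |10⟩)/√2` as a vector on `ℂ² ⊗ ℂ²`. -/
noncomputable def singlet : Fin 2 × Fin 2 → ℂ := fun p =>
  if p = (0, 1) then (1 : ℂ) / Real.sqrt 2
  else if p = (1, 0) then -(1 : ℂ) / Real.sqrt 2
  else 0

/-- The sandwich `⟨ψ⁻| M |ψ⁻⟩` in terms of four matrix entries. -/
lemma singlet_dot_lemma (M : Matrix (Fin 2 × Fin 2) (Fin 2 × Fin 2) ℂ) :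
    star singlet ⬝ᵥ (M *ᵥ singlet)
      = (M (0,1) (0,1) - M (0,1) (1,0) - M (1,0) (0,1) + M (1,0) (1,0)) / 2 := by
  simp only [dotProduct, mulVec, Fintype.sum_prod_type, Fin.sum_univ_two,
    Pi.star_apply]
  simp only [singlet]
  simp only [reduceCtorEq, Prod.mk.injEq, show ((0:Fin 2) = 1) = False by simp,
    show ((1:Fin 2) = 0) = False by simp, and_true, true_and, and_false, false_and,
    if_true, if_false, ite_true, ite_false, eq_self_iff_true, map_zero, map_neg,
    map_div₀, _root_.map_one, Complex.conj_ofReal, mul_zero, zero_mul, zero_add, add_zero]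
  have hs : star ((1:ℂ) / ↑(Real.sqrt 2)) = 1 / ↑(Real.sqrt 2) := by
    rw [star_div₀, star_one, Complex.star_def, Complex.conj_ofReal]
  have hs' : star ((-1:ℂ) / ↑(Real.sqrt 2)) = -1 / ↑(Real.sqrt 2) := by
    rw [star_div₀, Complex.star_def, Complex.conj_ofReal, map_neg, _root_.map_one]
  have hne : ((Real.sqrt 2 : ℝ) : ℂ) ≠ 0 := by
    norm_cast
    positivity
  have h2 : ((Real.sqrt 2 : ℝ) : ℂ) * ((Real.sqrt 2 : ℝ) : ℂ) = 2 := by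
    norm_cast
    exact Real.mul_self_sqrt (by norm_num)
  rw [hs, hs', star_zero]
  field_simp
  ring_nf
  rw [sq, h2]
  ring

lemma alc_key (a b : Fin 4) :
    (‖star singlet ⬝ᵥ ((pauli a ⊗ₖ pauli b) *ᵥ singlet)‖)^2
      = if a = b then 1 else 0 := by
  fin_cases a <;> fin_cases b <;>
    rw [singlet_dot_lemma] <;>
    simp [pauli, kroneckerMap_apply, Matrix.one_apply] <;>
    norm_num [Complex.norm_def, Complex.normSq]

/-- there is a perfect quantum entangled strategy for the ALC
task.  For some bijection from two-bit strings to Pauli indices, encoding by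
local Pauli operators on the shared singlet and measuring the projector onto
the singlet gives outcome probability `|⟨ψ⁻|(σ_{f x} ⊗ σ_{f y})|ψ⁻⟩|²` equal
to `1` when `x = y` and `0` when `x ≠ y`. -/
theorem alc_perfect_quantum_entangled_strategy :
    ∃ f : (Bool × Bool) ≃ Fin 4, ∀ x y : Bool × Bool,
      (‖star singlet ⬝ᵥ ((pauli (f x) ⊗ₖ pauli (f y)) *ᵥ singlet)‖)^2
        = if x = y then 1 else 0 := by
  refine ⟨(Equiv.prodCongr finTwoEquiv finTwoEquiv).symm.trans finProdFinEquiv,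
    fun x y => ?_⟩
  rw [alc_key]
  obtain ⟨a, b⟩ := x
  obtain ⟨c, d⟩ := y
  cases a <;> cases b <;> cases c <;> cases d <;> simp
end
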